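/- Residual identity for the entropy-regularized backup of the averaged value function: In the dynamic-KL scheme with evaluation step q_{k+1} = T^{1/η_k,0}_{π_{k+1}|π_k} q_k + ε_{k+1} for given ε_{k+1} ∈ ℝ^{S×A}, define E_k = −Σ_{j=1}^k η_j ε_j and X_k = Σ_{j=0}^k (η_{j+1} − η_j) T^{1/η_j,0}_{π_{j+1}|π_j} q_j. Then for every k ≥ 1: T^{0,1/Z_k}_{π_{k+1}} h_k − h_k = (1/Z_k) ( η_{k+1} q_{k+1} − η_0 q_0 + E_{k+1} − X_k + γ P H(π_0) ). -/

import Mathlib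

open Finset

noncomputable section

/-- A transition kernel on a finite MDP: `P s a s'` is the probability of moving to `s'`
from `s` after action `a`. -/
def IsKernel {S A : Type*} [Fintype S] (P : S → A → S → ℝ) : Prop :=
  (∀ s a s', 0 ≤ P s a s') ∧ ∀ s a, ∑ s', P s a s' = 1

/-- A policy: `π s a` is the probability of action `a` in state `s`. -/
def IsPolicy {S A : Type*} [Fintype A] (π : S → A → ℝ) : Prop :=
  (∀ s a, 0 ≤ π s a) ∧ ∀ s, ∑ a, π s a = 1

/-- `(P v)(s,a) = ∑_{s'} P(s'|s,a) v(s')`. -/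
def kerApp {S A : Type*} [Fintype S] (P : S → A → S → ℝ) (v : S → ℝ) : S → A → ℝ :=
  fun s a => ∑ s', P s a s' * v s'

/-- `⟨f₁,f₂⟩(s) = ∑_a f₁(s,a) f₂(s,a)`. -/
def dotSA {S A : Type*} [Fintype A] (f₁ f₂ : S → A → ℝ) : S → ℝ :=
  fun s => ∑ a, f₁ s a * f₂ s a

/-- The policy-induced transition operator `P_π q = P ⟨π, q⟩` on `ℝ^{S×A}`. -/
def Ppi {S A : Type*} [Fintype S] [Fintype A] (P : S → A → S → ℝ) (π : S → A → ℝ)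
    (q : S → A → ℝ) : S → A → ℝ :=
  kerApp P (dotSA π q)

/-- The Bellman evaluation operator `T_π q = r + γ P_π q`. -/
def bellman {S A : Type*} [Fintype S] [Fintype A] (P : S → A → S → ℝ) (r : S → A → ℝ)
    (γ : ℝ) (π : S → A → ℝ) (q : S → A → ℝ) : S → A → ℝ :=
  fun s a => r s a + γ * Ppi P π q s a

/-- The Shannon entropy of a policy, `H(π)(s) = -∑_a π(a|s) ln π(a|s)` (with `0 ln 0 = 0`). -/
def entPol {S A : Type*} [Fintype A] (π : S → A → ℝ) : S → ℝ :=
  fun s => -∑ a, π s a * Real.log (π s a)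

/-- The KL divergence between policies,
`KL(π₁‖π₂)(s) = ∑_a π₁(a|s)(ln π₁(a|s) - ln π₂(a|s))`. -/
def klPol {S A : Type*} [Fintype A] (π₁ π₂ : S → A → ℝ) : S → ℝ :=
  fun s => ∑ a, π₁ s a * (Real.log (π₁ s a) - Real.log (π₂ s a))

/-- The KL-regularized Bellman operator `T^{λ,0}_{π|μ} q = r + γ P(⟨π,q⟩ - λ KL(π‖μ))`. -/
def TKL {S A : Type*} [Fintype S] [Fintype A] (P : S → A → S → ℝ) (r : S → A → ℝ)
    (γ lam : ℝ) (π μ : S → A → ℝ) (q : S → A → ℝ) : S → A → ℝ :=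
  fun s a => r s a + γ * kerApp P (fun s' => dotSA π q s' - lam * klPol π μ s') s a

/-- The entropy-regularized Bellman operator `T^{0,τ}_π q = r + γ P(⟨π,q⟩ + τ H(π))`. -/
def TH {S A : Type*} [Fintype S] [Fintype A] (P : S → A → S → ℝ) (r : S → A → ℝ)
    (γ tau : ℝ) (π : S → A → ℝ) (q : S → A → ℝ) : S → A → ℝ :=
  fun s a => r s a + γ * kerApp P (fun s' => dotSA π q s' + tau * entPol π s') s a

/-- residual identity for the entropy-regularized backup of the averaged
value function `h_k` in the dynamic-KL scheme. -/
theorem entropy_backup_residual_identity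
    {S A : Type*} [Fintype S] [Fintype A] [Nonempty S] [Nonempty A]
    (P : S → A → S → ℝ) (hP : IsKernel P)
    (r : S → A → ℝ) (γ : ℝ) (hγ0 : 0 < γ) (hγ1 : γ < 1)
    (η : ℕ → ℝ) (hη : ∀ k, 0 < η k)
    (Z : ℕ → ℝ) (hZ : ∀ k, Z k = ∑ j ∈ Finset.range (k + 1), η j)
    (q ε : ℕ → S → A → ℝ)
    (h : ℕ → S → A → ℝ)
    (hh : ∀ k s a, h k s a = (1 / Z k) * ∑ j ∈ Finset.range (k + 1), η j * q j s a)
    (π : ℕ → S → A → ℝ)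
    (hπ0 : ∀ s a, π 0 s a = 1 / (Fintype.card A : ℝ))
    (hπ : ∀ k s a, π (k + 1) s a =
      Real.exp (Z k * h k s a) / ∑ b, Real.exp (Z k * h k s b))
    (hq : ∀ k s a, q (k + 1) s a =
      TKL P r γ (1 / η k) (π (k + 1)) (π k) (q k) s a + ε (k + 1) s a)
    (E : ℕ → S → A → ℝ)
    (hE : ∀ k s a, E k s a = -∑ j ∈ Finset.Icc 1 k, η j * ε j s a)
    (X : ℕ → S → A → ℝ)
    (hX : ∀ k s a, X k s a = ∑ j ∈ Finset.range (k + 1),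
      (η (j + 1) - η j) * TKL P r γ (1 / η j) (π (j + 1)) (π j) (q j) s a) :
    ∀ k, 1 ≤ k → ∀ s a,
      TH P r γ (1 / Z k) (π (k + 1)) (h k) s a - h k s a =
        (1 / Z k) *
          (η (k + 1) * q (k + 1) s a - η 0 * q 0 s a + E (k + 1) s a - X k s a
            + γ * kerApp P (entPol (π 0)) s a) := by
  intro k hk s a
  have hZpos : ∀ n, 0 < Z n := by
    intro n
    rw [hZ]
    exact Finset.sum_pos (fun j _ => hη j) ⟨0, Finset.mem_range.2 (Nat.succ_pos n)⟩
  have hZne : ∀ n, Z n ≠ 0 := fun n => (hZpos n).ne'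
  have hZh : ∀ n (s : S) (a : A),
      Z n * h n s a = ∑ j ∈ Finset.range (n + 1), η j * q j s a := by
    intro n s a
    rw [hh, one_div, ← mul_assoc, mul_inv_cancel₀ (hZne n), one_mul]
  have hcardA : (0:ℝ) < (Fintype.card A : ℝ) := by exact_mod_cast Fintype.card_pos
  have hNpos : ∀ n (s : S), 0 < ∑ b, Real.exp (Z n * h n s b) :=
    fun n s => Finset.sum_pos (fun b _ => Real.exp_pos _) Finset.univ_nonempty
  set Lg : ℕ → S → ℝ := fun n s => Real.log (∑ b, Real.exp (Z n * h n s b)) with hLg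
  set M : ℕ → S → ℝ := fun j s => if j = 0 then Real.log (Fintype.card A) else Lg (j-1) s
    with hM
  set W : ℕ → S → A → ℝ := fun j s a => if j = 0 then 0 else Z (j-1) * h (j-1) s a with hW
  have hWs : ∀ j (s : S) (a : A), W (j+1) s a = Z j * h j s a := by
    intro j s a; simp [hW]
  have hMs : ∀ j (s : S), M (j+1) s = Lg j s := by
    intro j s; simp [hM]
  have hsum1 : ∀ n (s : S), ∑ b, π (n+1) s b = 1 := by
    intro n s
    simp only [hπ]
    rw [← Finset.sum_div]
    exact div_self (hNpos n s).ne'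
  have hlog : ∀ j (s : S) (a : A), Real.log (π j s a) = W j s a - M j s := by
    intro j s a
    match j with
    | 0 =>
      simp only [hπ0, hW, hM, if_pos rfl]
      rw [Real.log_div one_ne_zero hcardA.ne', Real.log_one]
    | Nat.succ m =>
      rw [hπ, Real.log_div (Real.exp_ne_zero _) (hNpos m s).ne', Real.log_exp,
        hWs, hMs]
  have hdq : ∀ j (s : S) (a : A), W (j+1) s a - W j s a = η j * q j s a := by
    intro j s a
    cases j with
    | zero =>
      rw [hWs, hZh]
      simp [hW, Finset.sum_range_one]
    | succ m =>
      rw [hWs, hWs, hZh, hZh, Finset.sum_range_succ]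
      ring
  have key : ∀ j (s' : S),
      η j * dotSA (π (j+1)) (q j) s' - klPol (π (j+1)) (π j) s'
        = M (j+1) s' - M j s' := by
    intro j s'
    have h1 : klPol (π (j+1)) (π j) s'
        = ∑ b, (η j * (π (j+1) s' b * q j s' b)
            - (M (j+1) s' - M j s') * π (j+1) s' b) := by
      unfold klPol
      refine Finset.sum_congr rfl fun b _ => ?_
      rw [hlog, hlog]
      linear_combination (π (j+1) s' b) * hdq j s' b
    rw [h1, Finset.sum_sub_distrib, ← Finset.mul_sum, ← Finset.mul_sum, hsum1]
    unfold dotSA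
    ring
  have hent : ∀ s' : S,
      Z k * dotSA (π (k+1)) (h k) s' + entPol (π (k+1)) s' = Lg k s' := by
    intro s'
    unfold entPol dotSA
    have e : ∀ b, π (k+1) s' b * Real.log (π (k+1) s' b)
        = Z k * (π (k+1) s' b * h k s' b) - Lg k s' * π (k+1) s' b := by
      intro b
      rw [hlog, hWs, hMs]
      ring
    rw [Finset.sum_congr rfl (fun b _ => e b), Finset.sum_sub_distrib,
      ← Finset.mul_sum, ← Finset.mul_sum, hsum1]
    ring
  have hent0 : ∀ s' : S, entPol (π 0) s' = Real.log (Fintype.card A) := by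
    intro s'
    unfold entPol
    simp only [hπ0]
    rw [Finset.sum_const, Finset.card_univ, nsmul_eq_mul,
      Real.log_div one_ne_zero hcardA.ne', Real.log_one]
    field_simp
    ring
  have inner : ∀ s' : S,
      ∑ j ∈ Finset.range (k+1),
          (η j * dotSA (π (j+1)) (q j) s' - klPol (π (j+1)) (π j) s')
        = Lg k s' - Real.log (Fintype.card A) := by
    intro s'
    rw [Finset.sum_congr rfl (fun j _ => key j s'),
      Finset.sum_range_sub (fun j => M j s'), hMs]
    simp [hM]
  have term : ∀ j, η j * TKL P r γ (1/η j) (π (j+1)) (π j) (q j) s a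
      = η j * r s a + γ * ∑ s', P s a s' *
          (η j * dotSA (π (j+1)) (q j) s' - klPol (π (j+1)) (π j) s') := by
    intro j
    have hj : η j ≠ 0 := (hη j).ne'
    have hsw : ∑ s', P s a s' *
          (η j * dotSA (π (j+1)) (q j) s' - klPol (π (j+1)) (π j) s')
        = η j * ∑ s', P s a s' *
          (dotSA (π (j+1)) (q j) s' - 1/η j * klPol (π (j+1)) (π j) s') := by
      rw [Finset.mul_sum]
      refine Finset.sum_congr rfl fun s' _ => ?_
      linear_combination (P s a s' * klPol (π (j+1)) (π j) s') * (mul_one_div_cancel hj)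
    rw [hsw]
    simp only [TKL, kerApp]
    ring
  have lhsB : ∑ j ∈ Finset.range (k+1),
        η j * TKL P r γ (1/η j) (π (j+1)) (π j) (q j) s a
      = Z k * r s a + γ * ∑ s', P s a s' * (Lg k s' - Real.log (Fintype.card A)) := by
    rw [Finset.sum_congr rfl (fun j _ => term j), Finset.sum_add_distrib,
      ← Finset.sum_mul, ← hZ, ← Finset.mul_sum, Finset.sum_comm]
    congr 1
    congr 1
    refine Finset.sum_congr rfl fun s' _ => ?_
    rw [← Finset.mul_sum, inner s']
  have rhsB : Z k * TH P r γ (1/Z k) (π (k+1)) (h k) s a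
        - γ * kerApp P (entPol (π 0)) s a
      = Z k * r s a + γ * ∑ s', P s a s' * (Lg k s' - Real.log (Fintype.card A)) := by
    simp only [TH, kerApp]
    have e2 : ∑ s', P s a s' * (Lg k s' - Real.log (Fintype.card A))
        = (∑ s', P s a s' *
            (dotSA (π (k+1)) (h k) s' + 1/Z k * entPol (π (k+1)) s')) * Z k
          - ∑ s', P s a s' * entPol (π 0) s' := by
      rw [Finset.sum_mul, ← Finset.sum_sub_distrib]
      refine Finset.sum_congr rfl fun s' _ => ?_
      rw [hent0 s', ← hent s']
      linear_combination (-(P s a s' * entPol (π (k+1)) s')) * (one_div_mul_cancel (hZne k))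
    rw [e2]
    ring
  have stepB : ∑ j ∈ Finset.range (k+1),
        η j * TKL P r γ (1/η j) (π (j+1)) (π j) (q j) s a
      = Z k * TH P r γ (1/Z k) (π (k+1)) (h k) s a
        - γ * kerApp P (entPol (π 0)) s a := lhsB.trans rhsB.symm
  -- Step A: telescoping with the evaluation step
  have hTq : ∀ j, TKL P r γ (1/η j) (π (j+1)) (π j) (q j) s a
      = q (j+1) s a - ε (j+1) s a := by
    intro j
    rw [hq j s a]
    ring
  have split : ∀ j, η j * TKL P r γ (1/η j) (π (j+1)) (π j) (q j) s a
      = η (j+1) * q (j+1) s a - η (j+1) * ε (j+1) s a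
        - (η (j+1) - η j) * (q (j+1) s a - ε (j+1) s a) := by
    intro j
    rw [hTq j]
    ring
  have s1 : ∑ j ∈ Finset.range (k+1), η (j+1) * q (j+1) s a
      = Z k * h k s a + η (k+1) * q (k+1) s a - η 0 * q 0 s a := by
    have e1 := Finset.sum_range_succ' (fun j => η j * q j s a) (k+1)
    have e2 := Finset.sum_range_succ (fun j => η j * q j s a) (k+1)
    have e3 := hZh k s a
    linarith
  have s2 : ∑ j ∈ Finset.range (k+1), η (j+1) * ε (j+1) s a = - E (k+1) s a := by
    rw [hE, neg_neg, ← Finset.Ico_add_one_right_eq_Icc, Finset.sum_Ico_eq_sum_range]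
    norm_num
    exact Finset.sum_congr rfl fun j _ => by rw [Nat.add_comm]
  have s3 : ∑ j ∈ Finset.range (k+1),
        (η (j+1) - η j) * (q (j+1) s a - ε (j+1) s a) = X k s a := by
    rw [hX]
    exact Finset.sum_congr rfl fun j _ => by rw [hTq j]
  have stepA : ∑ j ∈ Finset.range (k+1),
        η j * TKL P r γ (1/η j) (π (j+1)) (π j) (q j) s a
      = Z k * h k s a + η (k+1) * q (k+1) s a - η 0 * q 0 s a
        + E (k+1) s a - X k s a := by
    rw [Finset.sum_congr rfl (fun j _ => split j), Finset.sum_sub_distrib,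
      Finset.sum_sub_distrib, s1, s2, s3]
    ring
  have final : Z k * (TH P r γ (1/Z k) (π (k+1)) (h k) s a - h k s a)
      = η (k+1) * q (k+1) s a - η 0 * q 0 s a + E (k+1) s a - X k s a
        + γ * kerApp P (entPol (π 0)) s a := by
    have e := stepA.symm.trans stepB
    rw [mul_sub]
    linarith
  rw [← final, one_div, inv_mul_cancel_left₀ (hZne k)]
end
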